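/- Let ρ : [0,T] → P₂(ℝ^d) be a weak solution of ∂_t ρ = K_σ * G_F[ρ] − ρ with K = N(0, I_d) standard Gaussian mutation kernel and strength σ. Then the energy En(ρ(t)) = (1/2)∫|h|² ρ(t,dh) satisfies d/dt En(ρ(t)) = En(G_F[ρ(t)]) − En(ρ(t)) + d σ²/2. Consequently, any stationary solution ρ^∞ satisfies En(ρ^∞) = En(G_F[ρ^∞]) + d σ²/2 and m(ρ^∞) = m(G_F[ρ^∞]). -/

import Mathlib

open MeasureTheory ProbabilityTheory Real

/-- Exponential selection operator `G_F[ρ](dh) = e^{F(h)} ρ(dh) / ∫ e^F dρ`. -/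
noncomputable def selectOp {d : ℕ} (F : EuclideanSpace ℝ (Fin d) → ℝ)
    (ρ : Measure (EuclideanSpace ℝ (Fin d))) : Measure (EuclideanSpace ℝ (Fin d)) :=
  ρ.withDensity (fun x => ENNReal.ofReal (exp (F x) / ∫ y, exp (F y) ∂ρ))

/-- Standard Gaussian measure `N(0, I_d)` on `ℝ^d`. -/
noncomputable def stdGaussian (d : ℕ) : Measure (EuclideanSpace ℝ (Fin d)) :=
  (Measure.pi fun _ : Fin d => gaussianReal 0 1).map
    (MeasurableEquiv.toLp 2 (Fin d → ℝ))

/-- Gaussian mutation of strength `σ`: convolution with `N(0, σ² I_d)`. -/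
noncomputable def mutate {d : ℕ} (σ : ℝ) (μ : Measure (EuclideanSpace ℝ (Fin d))) :
    Measure (EuclideanSpace ℝ (Fin d)) :=
  (μ.prod (stdGaussian d)).map (fun p => p.1 + σ • p.2)

/-- Energy `En(ρ) = (1/2)∫ ‖h‖² dρ`. -/
noncomputable def energy {d : ℕ} (ρ : Measure (EuclideanSpace ℝ (Fin d))) : ℝ :=
  (1/2) * ∫ x, ‖x‖ ^ 2 ∂ρ

open scoped NNReal ENNReal

lemma odd_int : ∫ x : ℝ, x * exp (-x^2/2) = 0 := by
  have h := MeasureTheory.integral_neg_eq_self (fun x : ℝ => x * exp (-x^2/2)) volume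
  simp only [neg_sq, neg_mul] at h
  rw [integral_neg] at h; linarith

lemma integrable_exp_half : Integrable (fun x : ℝ => exp (-x^2/2)) := by
  have := integrable_exp_neg_mul_sq (b := (1/2 : ℝ)) (by norm_num)
  convert this using 2 with x
  ring_nf

lemma integrable_sq_exp : Integrable (fun x : ℝ => x^2 * exp (-x^2/2)) := by
  have := integrable_rpow_mul_exp_neg_mul_sq (b := (1/2 : ℝ)) (by norm_num) (s := (2:ℝ)) (by norm_num)
  convert this using 2 with x
  rw [show ((2:ℝ) = ((2:ℕ):ℝ)) by norm_num, Real.rpow_natCast]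
  ring_nf

lemma integrable_abs_exp : Integrable (fun x : ℝ => x * exp (-x^2/2)) := by
  have := integrable_mul_exp_neg_mul_sq (b := (1/2 : ℝ)) (by norm_num)
  convert this using 2 with x
  ring_nf

lemma exp_half_int : ∫ x : ℝ, exp (-x^2/2) = √(2*π) := by
  have := integral_gaussian (1/2 : ℝ)
  rw [show (π / (1/2:ℝ)) = 2*π by ring] at this
  rw [← this]
  congr 1 with x
  ring_nf

lemma tendsto_mul_exp_top : Filter.Tendsto (fun x : ℝ => x * exp (-x^2/2)) Filter.atTop (nhds 0) := by
  have h := rpow_mul_exp_neg_mul_sq_isLittleO_exp_neg (b := (1/2:ℝ)) (by norm_num) 1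
  have h2 : Filter.Tendsto (fun x : ℝ => exp (-(1/2) * x)) Filter.atTop (nhds 0) := by
    apply Real.tendsto_exp_atBot.comp
    apply Filter.Tendsto.const_mul_atTop_of_neg (by norm_num : (-(1/2):ℝ) < 0) Filter.tendsto_id
  have h3 := h.isBigO.trans_tendsto h2
  refine h3.congr fun x => ?_
  rw [Real.rpow_one]
  ring_nf

lemma deriv_g (x : ℝ) : HasDerivAt (fun x : ℝ => -(x * exp (-x^2/2)))
    (x^2 * exp (-x^2/2) - exp (-x^2/2)) x := by
  have h1 : HasDerivAt (fun x : ℝ => -x^2/2) (-x) x := by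
    have := ((hasDerivAt_pow 2 x).div_const 2).neg
    refine (this.congr_deriv (by norm_num)).congr_of_eventuallyEq
      (Filter.Eventually.of_forall fun y => ?_)
    simp only [Pi.neg_apply]; ring
  have h3 := ((hasDerivAt_id x).mul h1.exp).neg
  refine (h3.congr_deriv ?_).congr_of_eventuallyEq (Filter.Eventually.of_forall fun y => ?_)
  · simp [id]
    ring
  · simp

lemma sq_exp_int : ∫ x : ℝ, x^2 * exp (-x^2/2) = √(2*π) := by
  set g : ℝ → ℝ := fun x => -(x * exp (-x^2/2)) with hg
  have hgc : Continuous g := by continuity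
  have htop : Filter.Tendsto g Filter.atTop (nhds 0) := by
    simpa using tendsto_mul_exp_top.neg
  have hbot : Filter.Tendsto g Filter.atBot (nhds 0) := by
    have := tendsto_mul_exp_top.comp Filter.tendsto_neg_atBot_atTop
    have h2 : ((fun x : ℝ => x * rexp (-x ^ 2 / 2)) ∘ Neg.neg) = fun x : ℝ => -(x * rexp (-x^2/2)) := by
      ext x; simp [Function.comp]
    rw [h2] at this
    exact this
  have hint : Integrable (fun x : ℝ => x^2 * exp (-x^2/2) - exp (-x^2/2)) :=
    integrable_sq_exp.sub integrable_exp_half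
  have hIoi := integral_Ioi_of_hasDerivAt_of_tendsto (f := g)
    (f' := fun x => x^2 * exp (-x^2/2) - exp (-x^2/2)) (a := 0)
    hgc.continuousWithinAt (fun x _ => deriv_g x) hint.integrableOn htop
  have hIic := integral_Iic_of_hasDerivAt_of_tendsto (f := g)
    (f' := fun x => x^2 * exp (-x^2/2) - exp (-x^2/2)) (a := 0)
    hgc.continuousWithinAt (fun x _ => deriv_g x) hint.integrableOn hbot
  have hg0 : g 0 = 0 := by simp [g]
  have htot : ∫ x : ℝ, (x^2 * exp (-x^2/2) - exp (-x^2/2)) = 0 := by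
    rw [← intervalIntegral.integral_Iic_add_Ioi hint.integrableOn hint.integrableOn, hIoi, hIic, hg0]
    ring
  rw [integral_sub integrable_sq_exp integrable_exp_half] at htot
  rw [← exp_half_int]
  linarith

lemma gaussianPDFReal_01 (x : ℝ) :
    gaussianPDFReal 0 1 x = (√(2*π))⁻¹ * exp (-x^2/2) := by
  simp [gaussianPDFReal]

lemma integral_gaussianReal_eq (g : ℝ → ℝ) :
    ∫ x, g x ∂(gaussianReal 0 1) = ∫ x, (√(2*π))⁻¹ * exp (-x^2/2) * g x := by
  rw [gaussianReal_of_var_ne_zero _ one_ne_zero]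
  have h1 : (gaussianPDF 0 1) = fun x => ((Real.toNNReal (gaussianPDFReal 0 1 x) : ℝ≥0) : ℝ≥0∞) := rfl
  rw [h1, integral_withDensity_eq_integral_smul (measurable_gaussianPDFReal 0 1).real_toNNReal g]
  congr 1 with x
  rw [NNReal.smul_def, Real.coe_toNNReal _ (gaussianPDFReal_nonneg _ _ _), smul_eq_mul,
    gaussianPDFReal_01]

lemma integrable_gaussianReal_iff (g : ℝ → ℝ) :
    Integrable g (gaussianReal 0 1) ↔
      Integrable (fun x => (Real.toNNReal (gaussianPDFReal 0 1 x) : ℝ) • g x) volume := by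
  rw [gaussianReal_of_var_ne_zero _ one_ne_zero]
  have h1 : (gaussianPDF 0 1) = fun x => ((Real.toNNReal (gaussianPDFReal 0 1 x) : ℝ≥0) : ℝ≥0∞) := rfl
  rw [h1]
  exact integrable_withDensity_iff_integrable_smul (measurable_gaussianPDFReal 0 1).real_toNNReal

lemma integrable_id_gauss : Integrable (fun x : ℝ => x) (gaussianReal 0 1) := by
  rw [integrable_gaussianReal_iff]
  apply Integrable.congr (integrable_abs_exp.const_mul ((√(2*π))⁻¹))
  filter_upwards with x
  rw [Real.coe_toNNReal _ (gaussianPDFReal_nonneg _ _ _), smul_eq_mul, gaussianPDFReal_01]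
  ring

lemma integrable_sq_gauss : Integrable (fun x : ℝ => x^2) (gaussianReal 0 1) := by
  rw [integrable_gaussianReal_iff]
  apply Integrable.congr (integrable_sq_exp.const_mul ((√(2*π))⁻¹))
  filter_upwards with x
  rw [Real.coe_toNNReal _ (gaussianPDFReal_nonneg _ _ _), smul_eq_mul, gaussianPDFReal_01]
  ring

lemma int_id_gauss : ∫ x, x ∂(gaussianReal 0 1) = 0 := by
  rw [integral_gaussianReal_eq]
  have h : ∀ x : ℝ, (√(2*π))⁻¹ * exp (-x^2/2) * x = (√(2*π))⁻¹ * (x * exp (-x^2/2)) := by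
    intro x; ring
  simp_rw [h, integral_const_mul, odd_int, mul_zero]

lemma int_sq_gauss : ∫ x, x^2 ∂(gaussianReal 0 1) = 1 := by
  rw [integral_gaussianReal_eq]
  have h : ∀ x : ℝ, (√(2*π))⁻¹ * exp (-x^2/2) * x^2 = (√(2*π))⁻¹ * (x^2 * exp (-x^2/2)) := by
    intro x; ring
  simp_rw [h, integral_const_mul, sq_exp_int]
  rw [inv_mul_cancel₀]
  positivity

lemma map_eval_pi {ι : Type*} [Fintype ι] {α : ι → Type*} [∀ i, MeasurableSpace (α i)]
    (μ : ∀ i, Measure (α i)) [∀ i, IsProbabilityMeasure (μ i)] (i : ι) :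
    (Measure.pi μ).map (Function.eval i) = μ i := by
  classical
  ext s hs
  rw [Measure.map_apply (measurable_pi_apply i) hs]
  have h1 : Function.eval i ⁻¹' s
      = Set.pi Set.univ (Function.update (fun j => (Set.univ : Set (α j))) i s) := by
    ext x
    simp only [Set.mem_preimage, Set.mem_univ_pi, Function.eval]
    constructor
    · intro hx j
      rcases eq_or_ne j i with rfl | hj
      · simpa using hx
      · simp [Function.update_of_ne hj]
    · intro hx
      have := hx i
      simpa using this
  rw [h1, Measure.pi_pi, Finset.prod_eq_single i]
  · simp
  · intro j _ hj
    simp [Function.update_of_ne hj]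
  · intro h
    exact absurd (Finset.mem_univ i) h

section PiGauss
variable {d : ℕ}

local notation "P" => Measure.pi (fun _ : Fin d => gaussianReal 0 1)
local notation "e" => MeasurableEquiv.symm (MeasurableEquiv.toLp 2 (Fin d → ℝ))

lemma integrable_eval_pi {f : ℝ → ℝ} (i : Fin d) (hf : AEStronglyMeasurable f (gaussianReal 0 1))
    (hint : Integrable f (gaussianReal 0 1)) :
    Integrable (fun x : Fin d → ℝ => f (x i)) P := by
  rw [← map_eval_pi (fun _ : Fin d => gaussianReal 0 1) i] at hint
  exact (integrable_map_measure (by rwa [map_eval_pi]) (measurable_pi_apply i).aemeasurable).mp hint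

lemma integral_eval_pi {f : ℝ → ℝ} (i : Fin d) (hf : AEStronglyMeasurable f (gaussianReal 0 1)) :
    ∫ x : Fin d → ℝ, f (x i) ∂P = ∫ y, f y ∂(gaussianReal 0 1) := by
  conv_rhs => rw [← map_eval_pi (fun _ : Fin d => gaussianReal 0 1) i]
  rw [integral_map (measurable_pi_apply i).aemeasurable (by rwa [map_eval_pi])]

instance isProbabilityMeasure_stdGaussian : IsProbabilityMeasure (stdGaussian d) :=
  Measure.isProbabilityMeasure_map (e).symm.measurable.aemeasurable

lemma integral_stdGaussian_eq (g : EuclideanSpace ℝ (Fin d) → ℝ) :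
    ∫ x, g x ∂(stdGaussian d) = ∫ x : Fin d → ℝ, g ((e).symm x) ∂P :=
  integral_map_equiv (e).symm g

lemma integrable_stdGaussian_iff (g : EuclideanSpace ℝ (Fin d) → ℝ) :
    Integrable g (stdGaussian d) ↔ Integrable (fun x : Fin d → ℝ => g ((e).symm x)) P :=
  ((e).symm.measurableEmbedding.integrable_map_iff)

lemma coord_equiv_symm (x : Fin d → ℝ) (i : Fin d) : ((e).symm x) i = x i := rfl

lemma normsq_equiv_symm (x : Fin d → ℝ) : ‖(e).symm x‖^2 = ∑ i, (x i)^2 := by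
  rw [EuclideanSpace.norm_eq, Real.sq_sqrt (by positivity)]
  congr 1 with i
  rw [coord_equiv_symm]
  simp [sq_abs]

lemma integrable_coord_stdGaussian (i : Fin d) :
    Integrable (fun x : EuclideanSpace ℝ (Fin d) => x i) (stdGaussian d) := by
  rw [integrable_stdGaussian_iff]
  exact integrable_eval_pi (f := fun y : ℝ => y) i measurable_id.aestronglyMeasurable integrable_id_gauss

lemma int_coord_stdGaussian (i : Fin d) :
    ∫ x, x i ∂(stdGaussian d) = 0 := by
  rw [integral_stdGaussian_eq]
  simp_rw [coord_equiv_symm]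
  rw [integral_eval_pi (f := fun y : ℝ => y) i measurable_id.aestronglyMeasurable, int_id_gauss]

lemma integrable_normsq_stdGaussian :
    Integrable (fun x : EuclideanSpace ℝ (Fin d) => ‖x‖^2) (stdGaussian d) := by
  rw [integrable_stdGaussian_iff]
  have : (fun x : Fin d → ℝ => ‖(e).symm x‖^2) = fun x : Fin d → ℝ => ∑ i, (x i)^2 := by
    ext x; exact normsq_equiv_symm x
  rw [this]
  exact integrable_finset_sum _ (fun i _ =>
    integrable_eval_pi i (continuous_pow 2).aestronglyMeasurable integrable_sq_gauss)

lemma int_normsq_stdGaussian :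
    ∫ x, ‖x‖^2 ∂(stdGaussian d) = d := by
  rw [integral_stdGaussian_eq]
  simp_rw [normsq_equiv_symm]
  rw [integral_finset_sum _ (fun i _ =>
    integrable_eval_pi i (continuous_pow 2).aestronglyMeasurable integrable_sq_gauss)]
  simp_rw [integral_eval_pi _ (continuous_pow 2).aestronglyMeasurable, int_sq_gauss]
  simp

end PiGauss




lemma MeasureTheory.Integrable.comp_fst' {α β : Type*} [MeasurableSpace α] [MeasurableSpace β]
    {μ : Measure α} {ν : Measure β} [SFinite ν] [IsProbabilityMeasure ν]
    {f : α → ℝ} (hf : Integrable f μ) :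
    Integrable (fun p : α × β => f p.1) (μ.prod ν) := by
  have h1 : Integrable f (Measure.map Prod.fst (μ.prod ν)) := by
    rw [Measure.map_fst_prod]; simpa [measure_univ] using hf
  exact (integrable_map_measure (by rw [Measure.map_fst_prod]; simpa [measure_univ] using hf.1)
    measurable_fst.aemeasurable).mp h1

lemma MeasureTheory.Integrable.comp_snd' {α β : Type*} [MeasurableSpace α] [MeasurableSpace β]
    {μ : Measure α} {ν : Measure β} [SFinite ν] [IsProbabilityMeasure μ]
    {f : β → ℝ} (hf : Integrable f ν) :
    Integrable (fun p : α × β => f p.2) (μ.prod ν) := by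
  have h1 : Integrable f (Measure.map Prod.snd (μ.prod ν)) := by
    rw [Measure.map_snd_prod]; simpa [measure_univ] using hf
  exact (integrable_map_measure (by rw [Measure.map_snd_prod]; simpa [measure_univ] using hf.1)
    measurable_snd.aemeasurable).mp h1

section Select
variable {d : ℕ} {F : EuclideanSpace ℝ (Fin d) → ℝ} {M : ℝ}
  {ρ : Measure (EuclideanSpace ℝ (Fin d))} [IsProbabilityMeasure ρ]

lemma integrable_expF (hFc : Continuous F) (hFb : ∀ x, |F x| ≤ M) :
    Integrable (fun x => exp (F x)) ρ := by
  refine (integrable_const (exp M)).mono' (hFc.rexp.aestronglyMeasurable) ?_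
  filter_upwards with x
  rw [Real.norm_eq_abs, abs_of_pos (exp_pos _)]
  exact exp_le_exp.mpr ((le_abs_self _).trans (hFb x))

lemma expInt_lb (hFc : Continuous F) (hFb : ∀ x, |F x| ≤ M) :
    exp (-M) ≤ ∫ y, exp (F y) ∂ρ := by
  have h := integral_mono (μ := ρ) (integrable_const (exp (-M))) (integrable_expF hFc hFb)
    (fun x => exp_le_exp.mpr (neg_le_of_abs_le (hFb x)))
  simpa [measure_univ] using h

lemma expInt_pos (hFc : Continuous F) (hFb : ∀ x, |F x| ≤ M) :
    0 < ∫ y, exp (F y) ∂ρ :=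
  lt_of_lt_of_le (exp_pos _) (expInt_lb hFc hFb)

lemma selectOp_isProb (hFc : Continuous F) (hFb : ∀ x, |F x| ≤ M) :
    IsProbabilityMeasure (selectOp F ρ) := by
  constructor
  rw [selectOp, withDensity_apply _ MeasurableSet.univ, Measure.restrict_univ]
  rw [← ofReal_integral_eq_lintegral_ofReal ((integrable_expF hFc hFb).div_const _)
    (Filter.Eventually.of_forall fun x => div_nonneg (exp_pos _).le
      (expInt_pos hFc hFb).le)]
  rw [integral_div, div_self (expInt_pos hFc hFb).ne']
  simp

lemma selectOp_le (hFc : Continuous F) (hFb : ∀ x, |F x| ≤ M) :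
    selectOp F ρ ≤ (ENNReal.ofReal (exp (2*M))) • ρ := by
  rw [selectOp, ← withDensity_const]
  refine withDensity_mono (Filter.Eventually.of_forall fun x => ?_)
  refine ENNReal.ofReal_le_ofReal ?_
  have h1 : exp (F x) ≤ exp M := exp_le_exp.mpr ((le_abs_self _).trans (hFb x))
  have h2 : exp (-M) ≤ ∫ y, exp (F y) ∂ρ := expInt_lb hFc hFb
  calc exp (F x) / ∫ y, exp (F y) ∂ρ ≤ exp M / exp (-M) :=
        div_le_div₀ (exp_pos M).le h1 (exp_pos _) h2
    _ = exp (2*M) := by rw [← exp_sub]; ring_nf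

lemma integrable_selectOp (hFc : Continuous F) (hFb : ∀ x, |F x| ≤ M)
    {g : EuclideanSpace ℝ (Fin d) → ℝ} (hg : Integrable g ρ) :
    Integrable g (selectOp F ρ) :=
  (hg.smul_measure ENNReal.ofReal_ne_top).mono_measure (selectOp_le hFc hFb)

end Select

section Mutate
variable {d : ℕ} (σ : ℝ) {μ : Measure (EuclideanSpace ℝ (Fin d))} [IsProbabilityMeasure μ]

lemma cont_addsmul : Continuous (fun p : EuclideanSpace ℝ (Fin d) × EuclideanSpace ℝ (Fin d) =>
    p.1 + σ • p.2) := continuous_fst.add (continuous_snd.const_smul σ)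

lemma integrable_mutate_normsq_prod (h2 : Integrable (fun x => ‖x‖^2) μ) :
    Integrable (fun p : EuclideanSpace ℝ (Fin d) × EuclideanSpace ℝ (Fin d) =>
      ‖p.1 + σ • p.2‖^2) (μ.prod (stdGaussian d)) := by
  have hb : Integrable (fun p : EuclideanSpace ℝ (Fin d) × EuclideanSpace ℝ (Fin d) =>
      2*‖p.1‖^2 + 2*σ^2*‖p.2‖^2) (μ.prod (stdGaussian d)) :=
    ((h2.const_mul 2).comp_fst').add ((integrable_normsq_stdGaussian.const_mul (2*σ^2)).comp_snd')
  refine hb.mono' (((cont_addsmul σ).norm.pow 2).aestronglyMeasurable) ?_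
  filter_upwards with p
  rw [Real.norm_eq_abs, abs_of_nonneg (by positivity)]
  have h1 : ‖p.1 + σ • p.2‖ ≤ ‖p.1‖ + |σ| * ‖p.2‖ := by
    refine (norm_add_le _ _).trans ?_
    rw [norm_smul, Real.norm_eq_abs]
  calc ‖p.1 + σ • p.2‖^2 ≤ (‖p.1‖ + |σ| * ‖p.2‖)^2 := by
        apply pow_le_pow_left₀ (norm_nonneg _) h1
    _ ≤ 2*‖p.1‖^2 + 2*σ^2*‖p.2‖^2 := by
        nlinarith [sq_nonneg (‖p.1‖ - |σ| * ‖p.2‖), sq_abs σ, norm_nonneg p.1, norm_nonneg p.2]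

lemma inner_int_gauss (x : EuclideanSpace ℝ (Fin d)) :
    ∫ y, ‖x + σ • y‖^2 ∂(stdGaussian d) = ‖x‖^2 + σ^2 * d := by
  have hexp : ∀ y : EuclideanSpace ℝ (Fin d),
      ‖x + σ • y‖^2 = ‖x‖^2 + ((2*σ) * ∑ i, x i * y i + σ^2 * ‖y‖^2) := by
    intro y
    rw [← real_inner_self_eq_norm_sq (x + σ • y)]
    rw [real_inner_add_add_self]
    rw [real_inner_smul_right, real_inner_smul_left, real_inner_smul_right]
    rw [real_inner_self_eq_norm_sq, real_inner_self_eq_norm_sq]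
    have : @inner ℝ _ _ x y = ∑ i, x i * y i := by
      rw [PiLp.inner_apply]
      simp [RCLike.inner_apply, conj_trivial, mul_comm]
    rw [this]
    ring
  simp_rw [hexp]
  have i2 : Integrable (fun y : EuclideanSpace ℝ (Fin d) => (2*σ) * ∑ i, x i * y i)
      (stdGaussian d) :=
    (integrable_finset_sum _ fun i _ => (integrable_coord_stdGaussian i).const_mul (x i)).const_mul _
  have i3 : Integrable (fun y : EuclideanSpace ℝ (Fin d) => σ^2 * ‖y‖^2) (stdGaussian d) :=
    integrable_normsq_stdGaussian.const_mul _
  rw [integral_add (f := fun _ => ‖x‖^2) (g := fun y : EuclideanSpace ℝ (Fin d) => (2*σ) * (∑ i, x i * y i) + σ^2 * ‖y‖^2)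
    (integrable_const _) (i2.add i3), integral_add i2 i3, integral_const, probReal_univ]
  rw [integral_const_mul, integral_finset_sum _ (fun i _ =>
    (integrable_coord_stdGaussian i).const_mul (x i))]
  simp_rw [integral_const_mul, int_coord_stdGaussian, mul_zero, Finset.sum_const_zero,
    int_normsq_stdGaussian]
  simp

lemma mutate_normsq (h2 : Integrable (fun x => ‖x‖^2) μ) :
    ∫ x, ‖x‖^2 ∂(mutate σ μ) = (∫ x, ‖x‖^2 ∂μ) + σ^2 * d := by
  rw [mutate, integral_map (f := fun x : EuclideanSpace ℝ (Fin d) => ‖x‖^2) (cont_addsmul σ).measurable.aemeasurable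
    ((continuous_norm.pow 2).aestronglyMeasurable)]
  rw [integral_prod _ (integrable_mutate_normsq_prod σ h2)]
  simp_rw [inner_int_gauss σ]
  rw [integral_add h2 (integrable_const _), integral_const, probReal_univ]
  simp

lemma integrable_mutate_normsq (h2 : Integrable (fun x => ‖x‖^2) μ) :
    Integrable (fun x => ‖x‖^2) (mutate σ μ) := by
  rw [mutate, integrable_map_measure (g := fun x : EuclideanSpace ℝ (Fin d) => ‖x‖^2) ((continuous_norm.pow 2).aestronglyMeasurable)
    (cont_addsmul σ).measurable.aemeasurable]
  exact integrable_mutate_normsq_prod σ h2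

lemma mutate_coord (i : Fin d) (h1 : Integrable (fun x => x i) μ) :
    ∫ x, x i ∂(mutate σ μ) = ∫ x, x i ∂μ := by
  have hcont : Continuous (fun x : EuclideanSpace ℝ (Fin d) => x i) :=
    (EuclideanSpace.proj (𝕜 := ℝ) i).continuous
  rw [mutate, integral_map (cont_addsmul σ).measurable.aemeasurable hcont.aestronglyMeasurable]
  have heq : (fun p : EuclideanSpace ℝ (Fin d) × EuclideanSpace ℝ (Fin d) =>
      (p.1 + σ • p.2) i) = fun p => p.1 i + σ * p.2 i := rfl
  rw [heq]
  have hint : Integrable (fun p : EuclideanSpace ℝ (Fin d) × EuclideanSpace ℝ (Fin d) =>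
      p.1 i + σ * p.2 i) (μ.prod (stdGaussian d)) :=
    h1.comp_fst'.add ((integrable_coord_stdGaussian i).const_mul σ).comp_snd'
  rw [integral_prod _ hint]
  have : ∀ x : EuclideanSpace ℝ (Fin d),
      ∫ y, (x i + σ * y i) ∂(stdGaussian d) = x i := by
    intro x
    rw [integral_add (integrable_const _) ((integrable_coord_stdGaussian i).const_mul σ),
      integral_const, probReal_univ, integral_const_mul, int_coord_stdGaussian]
    simp
  simp_rw [this]

end Mutate

lemma abs_coord_le_norm {d : ℕ} (x : EuclideanSpace ℝ (Fin d)) (i : Fin d) : |x i| ≤ ‖x‖ := by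
  have h1 := Finset.single_le_sum (f := fun j => ‖x j‖^2) (fun j _ => sq_nonneg _)
    (Finset.mem_univ i)
  calc |x i| = √(‖x i‖^2) := by rw [Real.sqrt_sq (norm_nonneg _), Real.norm_eq_abs]
    _ ≤ √(∑ j, ‖x j‖^2) := Real.sqrt_le_sqrt h1
    _ = ‖x‖ := (EuclideanSpace.norm_eq x).symm

lemma integrable_coord_of_normsq {d : ℕ} {μ : Measure (EuclideanSpace ℝ (Fin d))}
    [IsProbabilityMeasure μ] (h2 : Integrable (fun x => ‖x‖^2) μ) (i : Fin d) :
    Integrable (fun x => x i) μ := by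
  refine ((integrable_const (1:ℝ)).add h2).mono'
    ((EuclideanSpace.proj (𝕜 := ℝ) i).continuous.aestronglyMeasurable) ?_
  filter_upwards with x
  rw [Real.norm_eq_abs]
  simp only [Pi.add_apply]
  have := abs_coord_le_norm x i
  nlinarith [norm_nonneg x, sq_nonneg (‖x‖ - 1)]

/-- Along a weak solution of `∂_t ρ = K_σ * G_F[ρ] − ρ`, the energy satisfies
`d/dt En(ρ(t)) = En(G_F[ρ(t)]) − En(ρ(t)) + d σ²/2`; consequently any stationary
solution `ρ∞` satisfies `En(ρ∞) = En(G_F[ρ∞]) + d σ²/2` and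
`m(ρ∞) = m(G_F[ρ∞])`. -/
theorem energy_evolution {d : ℕ} (T : ℝ) (hT : 0 < T) (σ : ℝ) (hσ : 0 < σ)
    (F : EuclideanSpace ℝ (Fin d) → ℝ) (hFc : Continuous F)
    (M : ℝ) (hFb : ∀ x, |F x| ≤ M)
    (ρ : ℝ → Measure (EuclideanSpace ℝ (Fin d)))
    (hprob : ∀ t, IsProbabilityMeasure (ρ t))
    (hmom : ∀ t, Integrable (fun x => ‖x‖ ^ 2) (ρ t))
    (hweak : ∀ φ : EuclideanSpace ℝ (Fin d) → ℝ, Measurable φ →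
      (∀ t ∈ Set.Icc (0:ℝ) T, Integrable φ (ρ t) ∧
        Integrable φ (mutate σ (selectOp F (ρ t)))) →
      ∀ t ∈ Set.Icc (0:ℝ) T,
        HasDerivAt (fun s => ∫ x, φ x ∂(ρ s))
          ((∫ x, φ x ∂(mutate σ (selectOp F (ρ t)))) - ∫ x, φ x ∂(ρ t)) t) :
    (∀ t ∈ Set.Icc (0:ℝ) T,
      HasDerivAt (fun s => energy (ρ s))
        (energy (selectOp F (ρ t)) - energy (ρ t) + d * σ ^ 2 / 2) t) ∧
    (∀ ρinf : Measure (EuclideanSpace ℝ (Fin d)), IsProbabilityMeasure ρinf →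
      Integrable (fun x => ‖x‖ ^ 2) ρinf →
      mutate σ (selectOp F ρinf) = ρinf →
      energy ρinf = energy (selectOp F ρinf) + d * σ ^ 2 / 2 ∧
      ∀ i : Fin d, (∫ x, x i ∂ρinf) = ∫ x, x i ∂(selectOp F ρinf)) := by
  have hselP : ∀ t, IsProbabilityMeasure (selectOp F (ρ t)) := fun t => by
    haveI := hprob t; exact selectOp_isProb hFc hFb
  have hsel2 : ∀ t, Integrable (fun x => ‖x‖^2) (selectOp F (ρ t)) := fun t => by
    haveI := hprob t; exact integrable_selectOp hFc hFb (hmom t)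
  constructor
  · intro t ht
    haveI := hprob t; haveI := hselP t
    have hφ : Measurable (fun x : EuclideanSpace ℝ (Fin d) => ‖x‖^2) :=
      (continuous_norm.pow 2).measurable
    have hints : ∀ s ∈ Set.Icc (0:ℝ) T,
        Integrable (fun x : EuclideanSpace ℝ (Fin d) => ‖x‖^2) (ρ s) ∧
        Integrable (fun x : EuclideanSpace ℝ (Fin d) => ‖x‖^2)
          (mutate σ (selectOp F (ρ s))) := fun s _ => by
      haveI := hprob s; haveI := hselP s
      exact ⟨hmom s, integrable_mutate_normsq σ (hsel2 s)⟩
    have hD := (hweak _ hφ hints t ht).const_mul (1/2 : ℝ)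
    have hval : ∫ x, ‖x‖^2 ∂(mutate σ (selectOp F (ρ t)))
        = (∫ x, ‖x‖^2 ∂(selectOp F (ρ t))) + σ^2 * d := mutate_normsq σ (hsel2 t)
    have hgoal : (1/2 : ℝ) * ((∫ x, ‖x‖^2 ∂(mutate σ (selectOp F (ρ t)))) - ∫ x, ‖x‖^2 ∂(ρ t))
        = energy (selectOp F (ρ t)) - energy (ρ t) + d * σ ^ 2 / 2 := by
      rw [hval, energy, energy]; ring
    rw [hgoal] at hD
    exact hD
  · intro ρinf hprobinf h2inf heq
    haveI := hprobinf
    haveI : IsProbabilityMeasure (selectOp F ρinf) := selectOp_isProb hFc hFb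
    have hsel2' : Integrable (fun x => ‖x‖^2) (selectOp F ρinf) :=
      integrable_selectOp hFc hFb h2inf
    constructor
    · have hval := mutate_normsq σ hsel2'
      rw [heq] at hval
      rw [energy, energy, hval]; ring
    · intro i
      have hint_i : Integrable (fun x => x i) ρinf := integrable_coord_of_normsq h2inf i
      have hint_i' : Integrable (fun x => x i) (selectOp F ρinf) :=
        integrable_selectOp hFc hFb hint_i
      conv_lhs => rw [← heq]
      exact mutate_coord σ i hint_i'
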